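/- If (S, T⁺, T₁⁻) and (S, T⁺, T₂⁻) are both abstract spectra (with the same first topology T⁺), then the topologies T₁⁻ and T₂⁻ coincide. -/

import Mathlib

/-- `B` is a base for the topology `t`: every element of `B` is open and every
open set is a union of elements of `B`. -/
def IsBaseFor {S : Type*} (t : TopologicalSpace S) (B : Set (Set S)) : Prop :=
  (∀ V ∈ B, t.IsOpen V) ∧ ∀ U : Set S, t.IsOpen U → ∀ x ∈ U, ∃ V ∈ B, x ∈ V ∧ V ⊆ U

/-- The family `L⁺ = {U ∈ T⁺ : S∖U ∈ T⁻}` (for `specL tp tm`); `specL tm tp` is `L⁻`. -/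
def specL {S : Type*} (tp tm : TopologicalSpace S) : Set (Set S) :=
  {U | tp.IsOpen U ∧ tm.IsOpen Uᶜ}

/-- `(S, T⁺, T⁻)` is an abstract spectrum. -/
structure IsAbstractSpectrum {S : Type*} (tp tm : TopologicalSpace S) : Prop where
  nonempty : Nonempty S
  base_plus : IsBaseFor tp (specL tp tm)
  base_minus : IsBaseFor tm (specL tm tp)
  compact_of_plus_closed : ∀ F : Set S, @IsClosed S tp F → @IsCompact S tm F
  compact_of_minus_closed : ∀ F : Set S, @IsClosed S tm F → @IsCompact S tp F
  t0 : @T0Space S tp ∨ @T0Space S tm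

/-- The family `L⁻` is determined by `T⁺` alone: it consists of the complements of
the compact open subsets of `(S, T⁺)`. -/
lemma specL_minus_eq {S : Type*} (tp tm : TopologicalSpace S) (h : IsAbstractSpectrum tp tm) :
    specL tm tp = {U : Set S | tp.IsOpen Uᶜ ∧ @IsCompact S tp Uᶜ} := by
  ext U
  constructor
  · rintro ⟨hUm, hUp⟩
    refine ⟨hUp, h.compact_of_minus_closed Uᶜ ?_⟩
    exact { isOpen_compl := by rw [compl_compl]; exact hUm }
  · rintro ⟨hUp, hKc⟩
    -- cover Uᶜ by elements of L⁺ contained in it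
    have hbase := h.base_plus.2 Uᶜ hUp
    choose V hVmem hxV hVsub using hbase
    obtain ⟨t, ht⟩ := @IsCompact.elim_finite_subcover S tp Uᶜ ↥Uᶜ hKc
      (fun x => V x x.2) (fun x => (hVmem x x.2).1)
      (fun x hx => Set.mem_iUnion.2 ⟨⟨x, hx⟩, hxV x hx⟩)
    have hUeq : Uᶜ = ⋃ i ∈ t, V i i.2 := by
      apply Set.Subset.antisymm ht
      intro y hy
      simp only [Set.mem_iUnion] at hy
      obtain ⟨i, _, hyi⟩ := hy
      exact hVsub i i.2 hyi
    have hU : U = ⋂ i ∈ t, (V i i.2)ᶜ := by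
      have h2 := congrArg compl hUeq
      rw [compl_compl] at h2
      exact h2.trans (by simp [Set.compl_iUnion])
    refine ⟨?_, hUp⟩
    rw [hU]
    exact @isOpen_biInter_finset S ↥Uᶜ tm t _ (fun i _ => (hVmem i i.2).2)

theorem stmt2 {S : Type*} (tp tm₁ tm₂ : TopologicalSpace S)
    (h₁ : IsAbstractSpectrum tp tm₁) (h₂ : IsAbstractSpectrum tp tm₂) :
    tm₁ = tm₂ := by
  have hL : specL tm₁ tp = specL tm₂ tp := by
    rw [specL_minus_eq tp tm₁ h₁, specL_minus_eq tp tm₂ h₂]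
  -- a set is open iff every point has a basic neighborhood inside it
  have key : ∀ (tm : TopologicalSpace S), IsAbstractSpectrum tp tm → ∀ U : Set S,
      tm.IsOpen U ↔ ∀ x ∈ U, ∃ V ∈ specL tm tp, x ∈ V ∧ V ⊆ U := by
    intro tm h U
    constructor
    · exact h.base_minus.2 U
    · intro hU
      choose V hVmem hxV hVsub using hU
      have : U = ⋃ x : U, V x x.2 := by
        apply Set.Subset.antisymm
        · intro y hy
          exact Set.mem_iUnion.2 ⟨⟨y, hy⟩, hxV y hy⟩
        · intro y hy
          simp only [Set.mem_iUnion] at hy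
          obtain ⟨i, hyi⟩ := hy
          exact hVsub i i.2 hyi
      rw [this]
      exact @isOpen_iUnion S ↥U tm _ (fun i => h.base_minus.1 _ (hVmem i i.2))
  refine TopologicalSpace.ext_iff.2 fun U => ?_
  have k2 := key tm₂ h₂ U
  rw [← hL] at k2
  exact (key tm₁ h₁ U).trans k2.symm
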